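/- Let D be a Boolean algebra and let A and B be Boolean subalgebras of D such that D is generated as a Boolean algebra by A ∪ B. If a ∈ A ∩ B is an atom of the Boolean algebra A and also an atom of the Boolean algebra B, then a is an atom of D. -/
import Mathlib


/-- A subset of a Boolean algebra closed under the Boolean operations and containing `⊥`
and `⊤`. -/
def IsBooleanSubalgebra {B : Type*} [BooleanAlgebra B] (S : Set B) : Prop :=
  ⊥ ∈ S ∧ ⊤ ∈ S ∧ (∀ a ∈ S, ∀ b ∈ S, a ⊓ b ∈ S) ∧ (∀ a ∈ S, ∀ b ∈ S, a ⊔ b ∈ S) ∧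
    ∀ a ∈ S, aᶜ ∈ S

/-- The Boolean subalgebra of `B` generated by a subset `X`. -/
def genBA {B : Type*} [BooleanAlgebra B] (X : Set B) : Set B :=
  ⋂₀ {S : Set B | IsBooleanSubalgebra S ∧ X ⊆ S}

/-- An ideal of a Boolean algebra: a nonempty subset that is downward closed and closed
under binary joins. -/
def IsIdeal {B : Type*} [BooleanAlgebra B] (I : Set B) : Prop :=
  I.Nonempty ∧ (∀ a b : B, a ≤ b → b ∈ I → a ∈ I) ∧ ∀ a ∈ I, ∀ b ∈ I, a ⊔ b ∈ I

/-- `Y` is independent from `X` modulo `I` in the Boolean algebra `B` : for all finite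
disjoint subsets `F₁, F₂` of `Y` and every element `a` of the Boolean subalgebra generated
by `X` with `a ∉ I`, the element `(⨅ y ∈ F₁, y) ⊓ (⨅ y ∈ F₂, yᶜ) ⊓ a` is not in `I`. -/
def IndepFrom {B : Type*} [BooleanAlgebra B] (Y X I : Set B) : Prop :=
  ∀ F₁ F₂ : Finset B, ↑F₁ ⊆ Y → ↑F₂ ⊆ Y → Disjoint F₁ F₂ →
    ∀ a ∈ genBA X, a ∉ I → (F₁.inf id ⊓ F₂.inf (fun y => yᶜ) ⊓ a) ∉ I

/-- If `D` is generated by the union of two Boolean subalgebras `A` and `B`, then any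
common element that is an atom of both `A` and `B` is an atom of `D`. -/
theorem isAtom_of_subalgebra_atoms {D : Type*} [BooleanAlgebra D]
    (A B : Set D) (hA : IsBooleanSubalgebra A) (hB : IsBooleanSubalgebra B)
    (hgen : genBA (A ∪ B) = Set.univ)
    (a : D) (haA : a ∈ A) (haB : a ∈ B) (ha : a ≠ ⊥)
    (hatomA : ∀ c ∈ A, c ⊓ a = a ∨ c ⊓ a = ⊥)
    (hatomB : ∀ c ∈ B, c ⊓ a = a ∨ c ⊓ a = ⊥) :
    IsAtom a := by
  set S : Set D := {d | d ⊓ a = a ∨ d ⊓ a = ⊥} with hS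
  have hSsub : IsBooleanSubalgebra S := by
    refine ⟨Or.inr (bot_inf_eq a), Or.inl (top_inf_eq a), ?_, ?_, ?_⟩
    · rintro x (hx | hx) y (hy | hy) <;> simp only [hS, Set.mem_setOf_eq] <;>
        [left; right; right; right] <;> rw [inf_assoc, hy] <;> simp [hx]
    · rintro x (hx | hx) y (hy | hy) <;> simp only [hS, Set.mem_setOf_eq, inf_sup_right, hx, hy] <;> simp
    · rintro x (hx | hx) <;> simp only [hS, Set.mem_setOf_eq]
      · right
        have hax : a ≤ x := by rw [← hx]; exact inf_le_left
        exact eq_bot_iff.mpr (le_trans (inf_le_inf_left xᶜ hax) (by simp))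
      · left
        have : a ≤ xᶜ := le_compl_iff_disjoint_left.mpr (disjoint_iff.mpr hx)
        exact inf_eq_right.mpr this
  have hsub : genBA (A ∪ B) ⊆ S := by
    intro d hd
    exact hd S ⟨hSsub, by rintro x (hx | hx); exacts [hatomA x hx, hatomB x hx]⟩
  constructor
  · exact ha
  · intro b hb
    have hbS : b ∈ S := hsub (hgen ▸ Set.mem_univ b)
    rcases hbS with h | h
    · exact absurd (le_antisymm hb.le (h ▸ inf_le_left)) hb.ne
    · rwa [inf_eq_left.mpr hb.le] at h
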